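/- Suppose T ∈ (L^∞(Ω))ⁿ is divergence free with φ⁰(x,T) ≤ 1 a.e., w ∈ BV(ℝⁿ) with w = f on Ωᶜ, and ∫_{∂Ω} f [T,ν_Ω] dℋ^{n−1} ≥ ∫_Ω φ(x,Dw) + ∫_{∂Ω} φ(x,ν_Ω)|f − w| dℋ^{n−1}, where ∫_Ω φ(x,Dw) ≥ ∫_{∂Ω} w [T,ν_Ω] dℋ^{n−1}. Then φ(x,ν_Ω) = [T, sign(f−w) ν_Ω] holds ℋ^{n−1}-a.e. on the set {x ∈ ∂Ω : w(x) ≠ f(x)}, i.e., ∫_{∂Ω} φ(x,ν_Ω)|f−w| dℋ^{n−1} = ∫_{∂Ω} (f−w)[T,ν_Ω] dℋ^{n−1} with pointwise equality ℋ^{n−1}-a.e. where f ≠ w. -/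

import Mathlib

open MeasureTheory
open scoped RealInnerProductSpace ENNReal Topology

noncomputable section

abbrev Euc (n : ℕ) := EuclideanSpace ℝ (Fin n)

/-- `φ x` is a norm on `ℝⁿ`. -/
def IsNormAt {n : ℕ} (φ : Euc n → Euc n → ℝ) (x : Euc n) : Prop :=
  (∀ ξ, 0 ≤ φ x ξ) ∧ (∀ ξ, φ x ξ = 0 ↔ ξ = 0) ∧
  (∀ (c : ℝ) (ξ), φ x (c • ξ) = |c| * φ x ξ) ∧
  (∀ ξ η, φ x (ξ + η) ≤ φ x ξ + φ x η)

/-- The dual norm `φ⁰(x,ξ) = sup {ξ·p : φ(x,p) ≤ 1}`. -/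
def dualNorm {n : ℕ} (φ : Euc n → Euc n → ℝ) (x ξ : Euc n) : ℝ :=
  sSup {r | ∃ p : Euc n, φ x p ≤ 1 ∧ r = ⟪ξ, p⟫}
/-- Boundary equality: under the duality chain of inequalities, the boundary term is
saturated, i.e. `∫ φ(x,ν)|f-w| dσ = ∫ (f-w)[T,ν] dσ` and `φ(x,ν_Ω) = sign(f-w)[T,ν_Ω]`
holds `ℋ^{n-1}`-a.e. on the jump set `{w ≠ f} ⊆ ∂Ω`.  Here `σ` is the surface measure
on `∂Ω`, `ν` the outer unit normal, `nT = [T,ν_Ω]` the normal trace of the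
divergence-free field `T`, `w` the inner trace and `f` the boundary datum. -/
theorem stmt11 {n : ℕ} (Ω : Set (Euc n)) (φ : Euc n → Euc n → ℝ)
    (hnorm : ∀ x ∈ closure Ω, IsNormAt φ x)
    (σ : Measure (Euc n)) (ν : Euc n → Euc n) (hν : ∀ᵐ x ∂σ, ‖ν x‖ = 1)
    (f w : Euc n → ℝ) (nT : Euc n → ℝ) (IΩ : ℝ)  -- IΩ = ∫_Ω φ(x,Dw)
    (hnT : ∀ᵐ x ∂σ, |nT x| ≤ φ x (ν x))
    (hint1 : Integrable (fun x => φ x (ν x) * |f x - w x|) σ)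
    (hint2 : Integrable (fun x => w x * nT x) σ)
    (hint3 : Integrable (fun x => f x * nT x) σ)
    (hchain : (∫ x, f x * nT x ∂σ) ≥ IΩ + ∫ x, φ x (ν x) * |f x - w x| ∂σ)
    (hGG : IΩ ≥ ∫ x, w x * nT x ∂σ) :
    (∫ x, φ x (ν x) * |f x - w x| ∂σ) = (∫ x, (f x - w x) * nT x ∂σ) ∧
    ∀ᵐ x ∂σ, f x ≠ w x → φ x (ν x) = Real.sign (f x - w x) * nT x := by
  set g : Euc n → ℝ := fun x => φ x (ν x) * |f x - w x| - (f x - w x) * nT x with hg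
  have hintd : Integrable (fun x => (f x - w x) * nT x) σ := by
    have := hint3.sub hint2
    simpa [sub_mul, Pi.sub_def] using this
  have hintg : Integrable g σ := hint1.sub hintd
  have hge : 0 ≤ᵐ[σ] g := by
    filter_upwards [hnT] with x hx
    have h1 : (f x - w x) * nT x ≤ |f x - w x| * |nT x| := by
      calc (f x - w x) * nT x ≤ |(f x - w x) * nT x| := le_abs_self _
        _ = |f x - w x| * |nT x| := abs_mul _ _
    have h2 : |f x - w x| * |nT x| ≤ φ x (ν x) * |f x - w x| := by
      rw [mul_comm]
      exact mul_le_mul_of_nonneg_right hx (abs_nonneg _)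
    simp only [hg, Pi.zero_apply, sub_nonneg]
    exact h1.trans h2
  have hId : ∫ x, (f x - w x) * nT x ∂σ
      = (∫ x, f x * nT x ∂σ) - ∫ x, w x * nT x ∂σ := by
    rw [← integral_sub hint3 hint2]
    congr 1; ext x; ring
  have hIg : ∫ x, g x ∂σ = (∫ x, φ x (ν x) * |f x - w x| ∂σ)
      - ∫ x, (f x - w x) * nT x ∂σ := integral_sub hint1 hintd
  have hle : ∫ x, g x ∂σ ≤ 0 := by
    rw [hIg, hId]; linarith
  have hge' : 0 ≤ ∫ x, g x ∂σ := integral_nonneg_of_ae hge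
  have hzero : ∫ x, g x ∂σ = 0 := le_antisymm hle hge'
  have haezero : g =ᵐ[σ] 0 :=
    (integral_eq_zero_iff_of_nonneg_ae hge hintg).mp hzero
  constructor
  · have := hIg
    rw [hzero] at this
    linarith
  · filter_upwards [haezero] with x hx hne
    have hx0 : φ x (ν x) * |f x - w x| = (f x - w x) * nT x := by
      have : g x = 0 := hx
      simpa [hg, sub_eq_zero] using this
    have habs : |f x - w x| ≠ 0 := by
      simp [sub_eq_zero, hne]
    have hsgn : f x - w x = Real.sign (f x - w x) * |f x - w x| := by
      rcases lt_trichotomy (f x - w x) 0 with h | h | h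
      · rw [Real.sign_of_neg h, abs_of_neg h]; ring
      · rw [h]; simp
      · rw [Real.sign_of_pos h, abs_of_pos h]; ring
    have : φ x (ν x) * |f x - w x| = Real.sign (f x - w x) * nT x * |f x - w x| := by
      rw [hx0]; nth_rewrite 1 [hsgn]; ring
    exact mul_right_cancel₀ habs this
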